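/- Let E0 > 0 and set C12 = (3√3/16)·E0^{3/2}·(E0+4)². Suppose γ_n > 0 with γ_n → 0, μ_n > 0 with γ_n⁴/μ_n → C12, and for each n the pair (q_n, ν_n) with ν_n > 0 and 0 < q_n < 1 solves the transition system (A)–(B) for the parameters (E0, γ_n, μ_n), with q_n → 1. Then ν_n → ∞ and γ_n²·ν_n → C12; equivalently, the corresponding transition frequencies ω_n = E1(γ_n) + ν_n satisfy γ_n²·ω_n → C12. -/

import Mathlib

open Filter

/-- The unique positive root of `ε² + (E0+4)ε - γ² = 0`. -/
noncomputable def epsPar (E0 γ : ℝ) : ℝ :=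
  (-(E0 + 4) + Real.sqrt ((E0 + 4)^2 + 4 * γ^2)) / 2

/-- `E1 = E0 + ε`. -/
noncomputable def E1Par (E0 γ : ℝ) : ℝ := E0 + epsPar E0 γ

/-- `a = 4 + E0 + ε`. -/
noncomputable def aPar (E0 γ : ℝ) : ℝ := 4 + E0 + epsPar E0 γ

/-- Equation (A) of the transition system:
`(1-q)(1+q) = 12γ⁴ / (ν² (ν+E1) (ν+a+ε)²)`. -/
def EqA (E0 γ q ν : ℝ) : Prop :=
  (1 - q) * (1 + q) =
    12 * γ^4 / (ν^2 * (ν + E1Par E0 γ) * (ν + aPar E0 γ + epsPar E0 γ)^2)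

/-- Equation (B) of the transition system:
`(2+q)²/(1+q) = (9/2)(μ/γ²)(ν+a)²(ν+E1)/(ν(ν+a+ε))`. -/
def EqB (E0 γ μ q ν : ℝ) : Prop :=
  (2 + q)^2 / (1 + q) =
    (9/2) * (μ / γ^2) * ((ν + aPar E0 γ)^2 * (ν + E1Par E0 γ)) /
      (ν * (ν + aPar E0 γ + epsPar E0 γ))

lemma eps_pos' (E0 γ : ℝ) (hE0 : 0 < E0) (hγ : 0 < γ) : 0 < epsPar E0 γ := by
  unfold epsPar
  have h : E0 + 4 < Real.sqrt ((E0+4)^2 + 4*γ^2) := by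
    nth_rewrite 1 [show (E0+4:ℝ) = Real.sqrt ((E0+4)^2) from (Real.sqrt_sq (by linarith)).symm]
    exact Real.sqrt_lt_sqrt (by positivity) (by nlinarith)
  linarith

lemma eps_tendsto' (E0 : ℝ) (hE0 : 0 < E0) {γ : ℕ → ℝ} (hγ0 : Tendsto γ atTop (nhds 0)) :
    Tendsto (fun n => epsPar E0 (γ n)) atTop (nhds 0) := by
  have hc : Continuous fun g : ℝ => epsPar E0 g := by unfold epsPar; fun_prop
  have h := (hc.tendsto 0).comp hγ0
  have h0 : epsPar E0 0 = 0 := by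
    unfold epsPar
    rw [show (E0+4)^2 + 4*(0:ℝ)^2 = (E0+4)^2 by ring,
      Real.sqrt_sq (by linarith : (0:ℝ) ≤ E0 + 4)]
    ring
  simp only [h0] at h; exact h

/-- square-root form of equation (A) -/
lemma lemA' (E0 γ q ν : ℝ) (hE0 : 0 < E0) (hγ : 0 < γ) (hν : 0 < ν)
    (hq0 : 0 < q) (hq1 : q < 1) (hA : EqA E0 γ q ν) :
    γ^2 = Real.sqrt ((1 - q^2)/12) *
      (ν * ((ν + aPar E0 γ + epsPar E0 γ) * Real.sqrt (ν + E1Par E0 γ))) := by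
  have he := eps_pos' E0 γ hE0 hγ
  have he1 : 0 < ν + E1Par E0 γ := by unfold E1Par; linarith
  have ha : 0 < ν + aPar E0 γ + epsPar E0 γ := by unfold aPar; linarith
  have hD : (0:ℝ) < ν^2 * (ν + E1Par E0 γ) * (ν + aPar E0 γ + epsPar E0 γ)^2 := by positivity
  unfold EqA at hA
  have hγ4 : γ^4 = (1-q)*(1+q) * (ν^2 * (ν + E1Par E0 γ) * (ν + aPar E0 γ + epsPar E0 γ)^2) / 12 := by
    field_simp at hA
    linarith [hA]
  have hu2 : (Real.sqrt ((1 - q^2)/12))^2 = (1 - q^2)/12 :=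
    Real.sq_sqrt (by nlinarith)
  have hw2 : (Real.sqrt (ν + E1Par E0 γ))^2 = ν + E1Par E0 γ := Real.sq_sqrt he1.le
  set R := Real.sqrt ((1 - q^2)/12) *
      (ν * ((ν + aPar E0 γ + epsPar E0 γ) * Real.sqrt (ν + E1Par E0 γ))) with hR
  have hRnn : 0 ≤ R := by
    rw [hR]; positivity
  have hsq : (γ^2)^2 = R^2 := by
    rw [hR]
    linear_combination hγ4 - (ν^2*(ν + aPar E0 γ + epsPar E0 γ)^2 *
        (Real.sqrt (ν + E1Par E0 γ))^2) * hu2 -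
      ((1-q^2)/12*ν^2*(ν + aPar E0 γ + epsPar E0 γ)^2) * hw2
  calc γ^2 = Real.sqrt ((γ^2)^2) := (Real.sqrt_sq (sq_nonneg _)).symm
    _ = Real.sqrt (R^2) := by rw [hsq]
    _ = R := Real.sqrt_sq hRnn

/-- combination of (B) with the square-root form of (A) -/
lemma lemB' (E0 γ μ q ν : ℝ) (hγ : 0 < γ) (hμ : 0 < μ) (hν : 0 < ν)
    (hq0 : 0 < q) (hq1 : q < 1)
    (he : 0 < epsPar E0 γ) (he1 : 0 < ν + E1Par E0 γ)
    (ha : 0 < ν + aPar E0 γ + epsPar E0 γ)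
    (hB : EqB E0 γ μ q ν)
    (hγ2 : γ^2 = Real.sqrt ((1 - q^2)/12) *
      (ν * ((ν + aPar E0 γ + epsPar E0 γ) * Real.sqrt (ν + E1Par E0 γ)))) :
    Real.sqrt ((1 - q^2)/12) * ((ν + aPar E0 γ)^2 * ((ν + E1Par E0 γ) * Real.sqrt (ν + E1Par E0 γ)))
      = (γ^4/μ) / ((9/2)*(1+q)/(2+q)^2) := by
  have h1q : (1:ℝ) + q ≠ 0 := by linarith
  have h2q : (2:ℝ) + q ≠ 0 := by linarith
  have hγne : γ ≠ 0 := ne_of_gt hγ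
  have hνne : ν ≠ 0 := ne_of_gt hν
  have hane : ν + aPar E0 γ + epsPar E0 γ ≠ 0 := ne_of_gt ha
  have hμne : μ ≠ 0 := ne_of_gt hμ
  unfold EqB at hB
  field_simp at hB
  set u := Real.sqrt ((1 - q^2)/12) with hu
  set w := Real.sqrt (ν + E1Par E0 γ) with hw
  have hune : u ≠ 0 := by
    rw [hu]; exact ne_of_gt (Real.sqrt_pos.2 (by nlinarith))
  have hwne : w ≠ 0 := by rw [hw]; exact ne_of_gt (Real.sqrt_pos.2 he1)
  rw [hγ2] at hB
  rw [show γ^4 = (γ^2)^2 by ring, hγ2]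
  field_simp
  linear_combination -hB

/-- `γ²ν` in terms of `T` and the rational factor `r`. -/
lemma lemC' (E0 γ q ν : ℝ) (hν : 0 < ν)
    (he1 : 0 < ν + E1Par E0 γ) (haa : 0 < ν + aPar E0 γ)
    (hγ2 : γ^2 = Real.sqrt ((1 - q^2)/12) *
      (ν * ((ν + aPar E0 γ + epsPar E0 γ) * Real.sqrt (ν + E1Par E0 γ)))) :
    γ^2 * ν = (Real.sqrt ((1 - q^2)/12) *
        ((ν + aPar E0 γ)^2 * ((ν + E1Par E0 γ) * Real.sqrt (ν + E1Par E0 γ)))) *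
      (ν^2 * (ν + aPar E0 γ + epsPar E0 γ) / ((ν + aPar E0 γ)^2 * (ν + E1Par E0 γ))) := by
  have h1 : ν + aPar E0 γ ≠ 0 := ne_of_gt haa
  have h2 : ν + E1Par E0 γ ≠ 0 := ne_of_gt he1
  rw [hγ2]
  field_simp
/-- at the ω1-ω2 bifurcation power law `γ⁴/μ → C12`, the transition
solutions with `q → 1` have `ν → ∞` with `γ²ν → C12`; equivalently
`γ²ω → C12` for `ω = E1 + ν`. -/
theorem omega3_asymptotics_at_omega12_bifurcation
    (E0 : ℝ) (hE0 : 0 < E0) (γ μ q ν : ℕ → ℝ)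
    (C12 : ℝ) (hC12 : C12 = (3 * Real.sqrt 3 / 16) * E0 ^ ((3:ℝ)/2) * (E0 + 4)^2)
    (hγpos : ∀ n, 0 < γ n)
    (hγ0 : Tendsto γ atTop (nhds 0))
    (hμpos : ∀ n, 0 < μ n)
    (hpow : Tendsto (fun n => (γ n)^4 / μ n) atTop (nhds C12))
    (hνpos : ∀ n, 0 < ν n)
    (hq : ∀ n, 0 < q n ∧ q n < 1)
    (hA : ∀ n, EqA E0 (γ n) (q n) (ν n))
    (hB : ∀ n, EqB E0 (γ n) (μ n) (q n) (ν n))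
    (hq1 : Tendsto q atTop (nhds 1)) :
    Tendsto ν atTop atTop ∧
    Tendsto (fun n => (γ n)^2 * ν n) atTop (nhds C12) ∧
    Tendsto (fun n => (γ n)^2 * (E1Par E0 (γ n) + ν n)) atTop (nhds C12) := by
  -- notation
  have hepos : ∀ n, 0 < epsPar E0 (γ n) := fun n => eps_pos' E0 (γ n) hE0 (hγpos n)
  have helim : Tendsto (fun n => epsPar E0 (γ n)) atTop (nhds 0) := eps_tendsto' E0 hE0 hγ0
  have he1pos : ∀ n, 0 < ν n + E1Par E0 (γ n) := fun n => by
    have := hepos n; have := hνpos n; unfold E1Par; linarith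
  have hapos : ∀ n, 0 < ν n + aPar E0 (γ n) + epsPar E0 (γ n) := fun n => by
    have := hepos n; have := hνpos n; unfold aPar; linarith
  have haapos : ∀ n, 0 < ν n + aPar E0 (γ n) := fun n => by
    have := hepos n; have := hνpos n; unfold aPar; linarith
  set u : ℕ → ℝ := fun n => Real.sqrt ((1 - (q n)^2)/12) with hu_def
  set w : ℕ → ℝ := fun n => Real.sqrt (ν n + E1Par E0 (γ n)) with hw_def
  set T : ℕ → ℝ := fun n =>
    u n * ((ν n + aPar E0 (γ n))^2 * ((ν n + E1Par E0 (γ n)) * w n)) with hT_def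
  set k : ℕ → ℝ := fun n => (9/2)*(1 + q n)/(2 + q n)^2 with hk_def
  have hγ2 : ∀ n, (γ n)^2 = u n *
      (ν n * ((ν n + aPar E0 (γ n) + epsPar E0 (γ n)) * w n)) := fun n =>
    lemA' E0 (γ n) (q n) (ν n) hE0 (hγpos n) (hνpos n) (hq n).1 (hq n).2 (hA n)
  have hT : ∀ n, T n = ((γ n)^4 / μ n) / k n := fun n =>
    lemB' E0 (γ n) (μ n) (q n) (ν n) (hγpos n) (hμpos n) (hνpos n) (hq n).1 (hq n).2
      (hepos n) (he1pos n) (hapos n) (hB n) (hγ2 n)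
  -- k → 1
  have hkpos : ∀ n, 0 < k n := fun n => by
    have h1 := (hq n).1; rw [hk_def]; dsimp only; positivity
  have hklim : Tendsto k atTop (nhds 1) := by
    have h1 : Tendsto (fun n => (9:ℝ)/2 * (1 + q n)) atTop (nhds ((9:ℝ)/2 * (1+1))) :=
      (tendsto_const_nhds.add hq1).const_mul _
    have h2 : Tendsto (fun n => (2 + q n)^2) atTop (nhds ((2+1)^2)) :=
      (tendsto_const_nhds.add hq1).pow 2
    have h3 := h1.div h2 (by norm_num)
    rw [hk_def]
    convert h3 using 2
    all_goals norm_num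
  -- T → C12
  have hTlim : Tendsto T atTop (nhds C12) := by
    have h : Tendsto (fun n => ((γ n)^4 / μ n) / k n) atTop (nhds (C12 / 1)) :=
      hpow.div hklim one_ne_zero
    rw [show (fun n => ((γ n)^4 / μ n) / k n) = T from (funext fun n => (hT n).symm)] at h
    simpa using h
  have hC12pos : 0 < C12 := by
    rw [hC12]
    have h3 : (0:ℝ) < Real.sqrt 3 := Real.sqrt_pos.2 (by norm_num)
    have hr : 0 < E0 ^ ((3:ℝ)/2) := Real.rpow_pos_of_pos hE0 _
    have h4 : (0:ℝ) < (E0+4)^2 := by positivity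
    positivity
  -- u → 0, u > 0
  have hupos : ∀ n, 0 < u n := fun n => by
    rw [hu_def]
    exact Real.sqrt_pos.2 (by have h1 := (hq n).1; have h2 := (hq n).2; nlinarith)
  have hwpos : ∀ n, 0 < w n := fun n => by
    rw [hw_def]; exact Real.sqrt_pos.2 (he1pos n)
  have hu0 : Tendsto u atTop (nhds 0) := by
    have h1 : Tendsto (fun n => (1 - (q n)^2)/12) atTop (nhds ((1 - 1^2)/12)) :=
      (tendsto_const_nhds.sub (hq1.pow 2)).div_const 12
    have h2 := (Real.continuous_sqrt.tendsto _).comp h1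
    have h3 : ((1:ℝ) - 1^2)/12 = 0 := by norm_num
    rw [h3, Real.sqrt_zero] at h2
    rw [hu_def]
    exact h2
  -- the product X = T/u tends to infinity
  have hXlim : Tendsto (fun n => T n / u n) atTop atTop := by
    have hinv : Tendsto (fun n => (u n)⁻¹) atTop atTop := by
      apply tendsto_inv_nhdsGT_zero.comp
      exact tendsto_nhdsWithin_iff.2 ⟨hu0, Eventually.of_forall fun n => hupos n⟩
    have := Tendsto.pos_mul_atTop hC12pos hTlim hinv
    simpa [div_eq_mul_inv] using this
  have hX : ∀ n, T n / u n = (ν n + aPar E0 (γ n))^2 * ((ν n + E1Par E0 (γ n)) * w n) := fun n => by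
    rw [hT_def]; exact mul_div_cancel_left₀ _ (ne_of_gt (hupos n))
  -- ν → ∞
  have hνtop : Tendsto ν atTop atTop := by
    have hB6 : (0:ℝ) < E0 + 6 := by linarith
    have hsmall : ∀ᶠ n in atTop, epsPar E0 (γ n) ≤ 1 :=
      helim.eventually (eventually_le_nhds (by norm_num))
    rw [tendsto_atTop]
    intro b
    have hthr := hXlim.eventually_ge_atTop ((max b 0 + (E0+6))^4)
    filter_upwards [hsmall, hthr] with n hs ht
    -- bound the product by (ν + E0+6)^4
    have hν := hνpos n
    have hep := hepos n
    have hwb : w n ≤ ν n + (E0+6) := by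
      rw [hw_def]
      have h1 : ν n + E1Par E0 (γ n) ≤ ν n + (E0+1) := by unfold E1Par; linarith
      have h2 : Real.sqrt (ν n + E1Par E0 (γ n)) ≤ (ν n + E1Par E0 (γ n) + 1)/2 := by
        nlinarith [Real.sq_sqrt (he1pos n).le, Real.sqrt_nonneg (ν n + E1Par E0 (γ n)),
          sq_nonneg (Real.sqrt (ν n + E1Par E0 (γ n)) - 1)]
      unfold E1Par at h2 ⊢
      dsimp only
      nlinarith
    have hab : ν n + aPar E0 (γ n) ≤ ν n + (E0+6) := by unfold aPar; linarith
    have he1b : ν n + E1Par E0 (γ n) ≤ ν n + (E0+6) := by unfold E1Par; linarith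
    have hXb : T n / u n ≤ (ν n + (E0+6))^4 := by
      rw [hX n]
      have h0 : (0:ℝ) ≤ ν n + aPar E0 (γ n) := (haapos n).le
      have h1 : (0:ℝ) ≤ ν n + E1Par E0 (γ n) := (he1pos n).le
      have h2 : (0:ℝ) ≤ w n := (hwpos n).le
      have h5 : (0:ℝ) < ν n + (E0+6) := by linarith
      calc (ν n + aPar E0 (γ n))^2 * ((ν n + E1Par E0 (γ n)) * w n)
          ≤ (ν n + (E0+6))^2 * ((ν n + (E0+6)) * (ν n + (E0+6))) := by
            apply mul_le_mul (pow_le_pow_left₀ h0 hab 2)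
              (mul_le_mul he1b hwb h2 h5.le) (by positivity) (by positivity)
        _ = (ν n + (E0+6))^4 := by ring
    have h6 : (max b 0 + (E0+6))^4 ≤ (ν n + (E0+6))^4 := le_trans ht hXb
    have h7 : max b 0 + (E0+6) ≤ ν n + (E0+6) := by
      apply le_of_pow_le_pow_left₀ (by norm_num) (by linarith) h6
    calc b ≤ max b 0 := le_max_left _ _
      _ ≤ ν n := by linarith
  -- auxiliary limits
  have hAlim : Tendsto (fun n => aPar E0 (γ n)) atTop (nhds (4+E0)) := by
    unfold aPar
    have h := (tendsto_const_nhds (x := (4:ℝ)+E0) (f := atTop)).add helim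
    simpa using h
  have hE1lim : Tendsto (fun n => E1Par E0 (γ n)) atTop (nhds E0) := by
    unfold E1Par
    have h := (tendsto_const_nhds (x := E0) (f := atTop)).add helim
    simpa using h
  have hνAtop : Tendsto (fun n => ν n + aPar E0 (γ n)) atTop atTop :=
    tendsto_atTop_mono (fun n => by have := hepos n; unfold aPar; linarith) hνtop
  have hνE1top : Tendsto (fun n => ν n + E1Par E0 (γ n)) atTop atTop :=
    tendsto_atTop_mono (fun n => by have := hepos n; unfold E1Par; linarith) hνtop
  have hf1 : Tendsto (fun n => ν n / (ν n + aPar E0 (γ n))) atTop (nhds 1) := by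
    have h0 : Tendsto (fun n => aPar E0 (γ n) / (ν n + aPar E0 (γ n))) atTop (nhds 0) :=
      hAlim.div_atTop hνAtop
    have h1 := (tendsto_const_nhds (x := (1:ℝ)) (f := atTop)).sub h0
    have heq : (fun n => ν n / (ν n + aPar E0 (γ n)))
        = fun n => 1 - aPar E0 (γ n)/(ν n + aPar E0 (γ n)) := funext fun n => by
      have h2 := ne_of_gt (haapos n); field_simp; ring
    rw [heq]; simpa using h1
  have hf2 : Tendsto (fun n => (ν n + aPar E0 (γ n) + epsPar E0 (γ n)) /
      (ν n + E1Par E0 (γ n))) atTop (nhds 1) := by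
    have hc : Tendsto (fun n => aPar E0 (γ n) + epsPar E0 (γ n) - E1Par E0 (γ n))
        atTop (nhds 4) := by
      have h := (tendsto_const_nhds (x := (4:ℝ)) (f := atTop)).add helim
      have heq : (fun n => aPar E0 (γ n) + epsPar E0 (γ n) - E1Par E0 (γ n))
          = fun n => 4 + epsPar E0 (γ n) := funext fun n => by unfold aPar E1Par; ring
      rw [heq]; simpa using h
    have h0 := hc.div_atTop hνE1top
    have heq : (fun n => (ν n + aPar E0 (γ n) + epsPar E0 (γ n))/(ν n + E1Par E0 (γ n)))
        = fun n => 1 + (aPar E0 (γ n) + epsPar E0 (γ n) - E1Par E0 (γ n))/(ν n + E1Par E0 (γ n)) :=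
      funext fun n => by
        have h2 := ne_of_gt (he1pos n); field_simp; ring
    rw [heq]
    simpa using (tendsto_const_nhds (x := (1:ℝ)) (f := atTop)).add h0
  have hr1 : Tendsto (fun n => ν n^2 * (ν n + aPar E0 (γ n) + epsPar E0 (γ n)) /
      ((ν n + aPar E0 (γ n))^2 * (ν n + E1Par E0 (γ n)))) atTop (nhds 1) := by
    have h := (hf1.mul hf1).mul hf2
    have heq : (fun n => ν n^2 * (ν n + aPar E0 (γ n) + epsPar E0 (γ n)) /
        ((ν n + aPar E0 (γ n))^2 * (ν n + E1Par E0 (γ n))))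
        = fun n => (ν n / (ν n + aPar E0 (γ n))) * (ν n / (ν n + aPar E0 (γ n))) *
          ((ν n + aPar E0 (γ n) + epsPar E0 (γ n)) / (ν n + E1Par E0 (γ n))) :=
      funext fun n => by
        have h1 := ne_of_gt (haapos n); have h2 := ne_of_gt (he1pos n)
        field_simp
    rw [heq]; simpa using h
  -- γ²ν → C12
  have hγν : ∀ n, (γ n)^2 * ν n = T n * (ν n^2 * (ν n + aPar E0 (γ n) + epsPar E0 (γ n)) /
      ((ν n + aPar E0 (γ n))^2 * (ν n + E1Par E0 (γ n)))) := fun n =>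
    lemC' E0 (γ n) (q n) (ν n) (hνpos n) (he1pos n) (haapos n) (hγ2 n)
  have hlim2 : Tendsto (fun n => (γ n)^2 * ν n) atTop (nhds C12) := by
    have h := hTlim.mul hr1
    rw [show (fun n => T n * (ν n^2 * (ν n + aPar E0 (γ n) + epsPar E0 (γ n)) /
        ((ν n + aPar E0 (γ n))^2 * (ν n + E1Par E0 (γ n)))))
        = fun n => (γ n)^2 * ν n from funext fun n => (hγν n).symm] at h
    simpa using h
  -- third limit
  have hγ20 : Tendsto (fun n => (γ n)^2) atTop (nhds 0) := by simpa using hγ0.pow 2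
  have h3 : Tendsto (fun n => (γ n)^2 * E1Par E0 (γ n)) atTop (nhds 0) := by
    simpa using hγ20.mul hE1lim
  have hlim3 : Tendsto (fun n => (γ n)^2 * (E1Par E0 (γ n) + ν n)) atTop (nhds C12) := by
    have h := h3.add hlim2
    have heq : (fun n => (γ n)^2 * E1Par E0 (γ n) + (γ n)^2 * ν n)
        = fun n => (γ n)^2 * (E1Par E0 (γ n) + ν n) := funext fun n => by ring
    rw [heq] at h
    simpa using h
  exact ⟨hνtop, hlim2, hlim3⟩
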